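/- Tail unfocused forecaster: let ξ and τ be independent random variables with ξ exponential of rate 1 and P(τ = +1) = P(τ = −1) = 1/2; set a_τ = log((2 + τ)/2), Y = ξ, and let F be the conditional cdf of ξ + a_τ given τ, i.e. 1 − F(t) = ((2 + τ)/2) e^{−t} for t ≥ a_τ. Then: (i) for all t ≥ log(3/2) and u ∈ [0,1], P(Z_F^{(t)} ≤ u, Y > t)/E[1 − F(t)] = u, so F is probabilistically tail calibrated for Y; (ii) for all t ≥ log(3/2), P(Y > t | τ)/(1 − F(t)) = 2/(2 + τ), which does not converge almost surely to 1 as t → ∞, so F is not tail auto-calibrated for Y. -/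

import Mathlib

open MeasureTheory ProbabilityTheory Filter Set Topology

noncomputable section

/-- Conditional probability of a set given a sub-σ-algebra, as a real-valued function. -/
def condProb {Ω : Type*} {m0 : MeasurableSpace Ω} (μ : Measure Ω) (m : MeasurableSpace Ω)
    (A : Set Ω) : Ω → ℝ :=
  μ[A.indicator (fun _ => (1 : ℝ))|m]

/-- The conditional forecast excess distribution `F_t`. -/
def excessCdf (F : ℝ → ℝ) (t x : ℝ) : ℝ :=
  if F t < 1 then (F (x + t) - F t) / (1 - F t) else 1

/-- The excess probability integral transform `Z_F^{(t)}`. -/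
def excessPIT {Ω : Type*} (F : Ω → ℝ → ℝ) (Y : Ω → ℝ) (t : ℝ) (ω : Ω) : ℝ :=
  excessCdf (F ω) t (Y ω - t)

/-- Upper endpoint `x_Y = sup {x : P(Y ≤ x) < 1}` of the outcome, in `EReal`. -/
def upperEndpoint {Ω : Type*} {mΩ : MeasurableSpace Ω} (μ : Measure Ω) (Y : Ω → ℝ) : EReal :=
  sSup (Real.toEReal '' {x : ℝ | μ {ω | Y ω ≤ x} < 1})

/-- Upper endpoint of a (deterministic) cdf. -/
def cdfEndpoint (F : ℝ → ℝ) : EReal :=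
  sSup (Real.toEReal '' {x : ℝ | F x < 1})

/-- The filter of real `t` tending to an extended-real endpoint `e` from below. -/
def toEndpoint (e : EReal) : Filter ℝ :=
  Filter.comap Real.toEReal (𝓝[<] e)

/-- `F` is a random cdf: measurable in `ω`, and almost surely a continuous cdf. -/
def IsRandomCdf {Ω : Type*} {mΩ : MeasurableSpace Ω} (μ : Measure Ω) (F : Ω → ℝ → ℝ) : Prop :=
  (∀ x : ℝ, Measurable fun ω => F ω x) ∧
    ∀ᵐ ω ∂μ, Monotone (F ω) ∧ Continuous (F ω) ∧
      Tendsto (F ω) atTop (𝓝 1) ∧ Tendsto (F ω) atBot (𝓝 0)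

/-- The endpoint assumption for a sub-σ-algebra `m`: the conditional distribution of `Y`
given `m` has (non-random) upper endpoint `x_Y`. -/
def EndpointAssumption {Ω : Type*} {m0 : MeasurableSpace Ω} (μ : Measure Ω)
    (m : MeasurableSpace Ω) (Y : Ω → ℝ) : Prop :=
  (∀ t : ℝ, (t : EReal) < upperEndpoint μ Y →
      ∀ᵐ ω ∂μ, 0 < condProb μ m {ω' | t < Y ω'} ω) ∧
    ∀ᵐ ω ∂μ, condProb μ m {ω' | upperEndpoint μ Y < (Y ω' : EReal)} ω = 0

/-- `F` is tail `m`-calibrated for `Y`. -/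
def TailCalibrated {Ω : Type*} {m0 : MeasurableSpace Ω} (μ : Measure Ω)
    (m : MeasurableSpace Ω) (F : Ω → ℝ → ℝ) (Y : Ω → ℝ) : Prop :=
  (∀ t : ℝ, (t : EReal) < upperEndpoint μ Y →
      ∀ᵐ ω ∂μ, 0 < (μ[fun ω' => 1 - F ω' t|m]) ω) ∧
    ∀ u ∈ Icc (0 : ℝ) 1, ∀ᵐ ω ∂μ,
      Tendsto (fun t : ℝ =>
          condProb μ m {ω' | excessPIT F Y t ω' ≤ u ∧ t < Y ω'} ω /
            (μ[fun ω' => 1 - F ω' t|m]) ω)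
        (toEndpoint (upperEndpoint μ Y)) (𝓝 u)

/-- `F` is probabilistically tail calibrated for `Y`. -/
def ProbTailCalibrated {Ω : Type*} {mΩ : MeasurableSpace Ω} (μ : Measure Ω)
    (F : Ω → ℝ → ℝ) (Y : Ω → ℝ) : Prop :=
  (∀ t : ℝ, (t : EReal) < upperEndpoint μ Y → 0 < ∫ ω, (1 - F ω t) ∂μ) ∧
    ∀ u ∈ Icc (0 : ℝ) 1,
      Tendsto (fun t : ℝ =>
          (μ {ω | excessPIT F Y t ω ≤ u ∧ t < Y ω}).toReal / ∫ ω, (1 - F ω t) ∂μ)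
        (toEndpoint (upperEndpoint μ Y)) (𝓝 u)

/-- `F` is marginally tail calibrated for `Y`. -/
def MargTailCalibrated {Ω : Type*} {mΩ : MeasurableSpace Ω} (μ : Measure Ω)
    (F : Ω → ℝ → ℝ) (Y : Ω → ℝ) : Prop :=
  (∀ t : ℝ, (t : EReal) < upperEndpoint μ Y → 0 < ∫ ω, (1 - F ω t) ∂μ) ∧
    Tendsto (fun t : ℝ =>
        ⨆ x : Ici (0 : ℝ),
          |(μ {ω | t < Y ω ∧ Y ω ≤ t + (x : ℝ)}).toReal / (∫ ω, (1 - F ω t) ∂μ) -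
            (∫ ω in {ω' | t < Y ω'}, excessCdf (F ω) t (x : ℝ) ∂μ) /
              (μ {ω' | t < Y ω'}).toReal|)
      (toEndpoint (upperEndpoint μ Y)) (𝓝 0)

/-- Generalized Pareto survival function `(1 + ξ x)₊^(-1/ξ)` with unit scale and shape `ξ`,
interpreted as `exp (-x)` when `ξ = 0`. -/
def gpdSurv (ξ x : ℝ) : ℝ :=
  if ξ = 0 then Real.exp (-x) else (max (1 + ξ * x) 0) ^ (-(1 : ℝ) / ξ)

/-- the tail unfocused forecaster is probabilistically tail calibrated but not
tail auto-calibrated. -/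
theorem tail_unfocused_forecaster
    {Ω : Type*} {m0 : MeasurableSpace Ω} (μ : Measure Ω) [IsProbabilityMeasure μ]
    (Y τ : Ω → ℝ) (hY : Measurable Y) (hτ : Measurable τ)
    (hτval : ∀ ω, τ ω = 1 ∨ τ ω = -1)
    (hτhalf : μ {ω | τ ω = 1} = 1 / 2)
    (hindep : IndepFun Y τ μ)
    (hYexp : ∀ t : ℝ, 0 ≤ t → μ {ω | t < Y ω} = ENNReal.ofReal (Real.exp (-t)))
    (hYnonneg : μ {ω | Y ω < 0} = 0)
    (F : Ω → ℝ → ℝ)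
    (hFdef : ∀ ω x, F ω x =
      if Real.log ((2 + τ ω) / 2) ≤ x then 1 - ((2 + τ ω) / 2) * Real.exp (-x) else 0) :
    (∀ t : ℝ, Real.log (3 / 2) ≤ t → ∀ u ∈ Icc (0 : ℝ) 1,
        (μ {ω | excessPIT F Y t ω ≤ u ∧ t < Y ω}).toReal /
          (∫ ω, (1 - F ω t) ∂μ) = u) ∧
      ProbTailCalibrated μ F Y ∧
      (∀ t : ℝ, Real.log (3 / 2) ≤ t →
        ∀ᵐ ω ∂μ,
          condProb μ (MeasurableSpace.comap τ inferInstance) {ω' | t < Y ω'} ω /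
            (1 - F ω t) = 2 / (2 + τ ω)) ∧
      ¬ (∀ᵐ ω ∂μ,
        Tendsto (fun t : ℝ =>
            condProb μ (MeasurableSpace.comap τ inferInstance) {ω' | t < Y ω'} ω /
              (1 - F ω t))
          atTop (𝓝 1)) := by
  classical
  have hmeasIoi : ∀ r : ℝ, MeasurableSet {ω | r < Y ω} := fun r =>
    measurableSet_lt measurable_const hY
  have hexp32 : (0:ℝ) < Real.log (3/2) := Real.log_pos (by norm_num)
  have hlog12 : Real.log ((1:ℝ)/2) < 0 := Real.log_neg (by norm_num) (by norm_num)
  have hτmeas : MeasurableSet {ω | τ ω = 1} := hτ (measurableSet_singleton 1)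
  have hτcomp : {ω | τ ω = 1}ᶜ = {ω | τ ω = -1} := by
    ext ω; rcases hτval ω with h|h <;> simp [h] <;> norm_num
  have hτhalf' : μ {ω | τ ω = -1} = 1/2 := by
    rw [← hτcomp, measure_compl hτmeas (measure_ne_top μ _), measure_univ, hτhalf]
    rw [ENNReal.sub_half ENNReal.one_ne_top]
  -- decomposition of 1 - F
  have hFτ : ∀ t ω, 1 - F ω t =
      Set.indicator {ω' | τ ω' = 1}
        (fun _ => if Real.log (3/2) ≤ t then (3/2)*Real.exp (-t) else 1) ω
      + Set.indicator {ω' | τ ω' = 1}ᶜ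
        (fun _ => if Real.log (1/2) ≤ t then (1/2)*Real.exp (-t) else 1) ω := by
    intro t ω
    rcases hτval ω with h|h
    · have hm : ω ∈ {ω' | τ ω' = 1} := h
      rw [Set.indicator_of_mem hm, Set.indicator_of_notMem (by simp [h])]
      rw [hFdef, h, show ((2:ℝ)+1)/2 = 3/2 by norm_num]
      split_ifs <;> ring
    · have hm : ω ∈ {ω' | τ ω' = 1}ᶜ := fun hmem => by
        rw [show τ ω = 1 from hmem] at h; norm_num at h
      rw [Set.indicator_of_notMem hm, Set.indicator_of_mem hm]
      rw [hFdef, h, show ((2:ℝ)+(-1))/2 = 1/2 by norm_num]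
      split_ifs <;> ring
  have hhalf_toReal : (μ {ω | τ ω = 1}).toReal = 1/2 := by rw [hτhalf]; simp
  have hhalf_toReal' : (μ {ω | τ ω = 1}ᶜ).toReal = 1/2 := by rw [hτcomp, hτhalf']; simp
  have hIntegral : ∀ t, ∫ ω, (1 - F ω t) ∂μ =
      (if Real.log (3/2) ≤ t then (3/2)*Real.exp (-t) else 1)/2
      + (if Real.log (1/2) ≤ t then (1/2)*Real.exp (-t) else 1)/2 := by
    intro t
    simp_rw [hFτ t]
    rw [integral_add ((integrable_const _).indicator hτmeas)
      ((integrable_const _).indicator hτmeas.compl)]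
    rw [integral_indicator_const _ hτmeas, integral_indicator_const _ hτmeas.compl,
      measureReal_def, measureReal_def, hhalf_toReal, hhalf_toReal', smul_eq_mul, smul_eq_mul]
    ring
  have hIntpos : ∀ t, 0 < ∫ ω, (1 - F ω t) ∂μ := by
    intro t
    rw [hIntegral t]
    have e1 := Real.exp_pos (-t)
    split_ifs <;> positivity
  have hIntegral' : ∀ t, Real.log (3/2) ≤ t → ∫ ω, (1 - F ω t) ∂μ = Real.exp (-t) := by
    intro t ht
    rw [hIntegral t, if_pos ht, if_pos (hlog12.le.trans (hexp32.le.trans ht))]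
    ring
  have hF1 : ∀ (ω : Ω) {t : ℝ}, Real.log (3/2) ≤ t →
      F ω t = 1 - ((2+τ ω)/2)*Real.exp (-t) := by
    intro ω t ht
    rw [hFdef]
    rw [if_pos]
    rcases hτval ω with h|h <;> rw [h]
    · exact le_trans (le_of_eq (by norm_num)) ht
    · refine le_trans (le_of_eq (by norm_num)) (hlog12.le.trans (hexp32.le.trans ht))
  have hc_pos : ∀ ω : Ω, 0 < (2+τ ω)/2 := by
    intro ω; rcases hτval ω with h|h <;> rw [h] <;> norm_num
  have hPIT : ∀ t, Real.log (3/2) ≤ t → ∀ ω, t < Y ω →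
      excessPIT F Y t ω = 1 - Real.exp (t - Y ω) := by
    intro t ht ω hω
    set c := (2 + τ ω)/2 with hcdef
    have hc := hc_pos ω
    have hFt := hF1 ω ht
    have hFY := hF1 ω (ht.trans hω.le)
    have et := Real.exp_pos (-t)
    unfold excessPIT excessCdf
    have hY' : Y ω - t + t = Y ω := by ring
    rw [hY', hFt, hFY, if_pos (by nlinarith)]
    have hrw : Real.exp (-Y ω) = Real.exp (t - Y ω) * Real.exp (-t) := by
      rw [← Real.exp_add]; ring_nf
    rw [hrw]
    have hden : (1:ℝ) - (1 - c * Real.exp (-t)) ≠ 0 := by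
      have : (0:ℝ) < c * Real.exp (-t) := by positivity
      intro hcon; nlinarith
    rw [div_eq_iff hden]
    ring
  -- Part 1
  have part1 : ∀ t : ℝ, Real.log (3 / 2) ≤ t → ∀ u ∈ Icc (0 : ℝ) 1,
      (μ {ω | excessPIT F Y t ω ≤ u ∧ t < Y ω}).toReal /
        (∫ ω, (1 - F ω t) ∂μ) = u := by
    intro t ht u hu
    obtain ⟨hu0, hu1⟩ := hu
    have htpos : 0 < t := hexp32.trans_le ht
    rw [hIntegral' t ht]
    rcases eq_or_lt_of_le hu1 with h1|h1
    · subst h1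
      have hset : {ω | excessPIT F Y t ω ≤ 1 ∧ t < Y ω} = {ω | t < Y ω} := by
        ext ω
        refine ⟨fun h => h.2, fun h => ⟨?_, h⟩⟩
        rw [hPIT t ht ω h]
        nlinarith [Real.exp_pos (t - Y ω)]
      rw [hset, hYexp t htpos.le, ENNReal.toReal_ofReal (Real.exp_pos _).le,
        div_self (Real.exp_ne_zero _)]
    · set s := t - Real.log (1-u) with hs
      have h1u : 0 < 1 - u := by linarith
      have hlog1u : Real.log (1-u) ≤ 0 := Real.log_nonpos (by linarith) (by linarith)
      have hts : t ≤ s := by rw [hs]; linarith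
      have hset : {ω | excessPIT F Y t ω ≤ u ∧ t < Y ω} =
          {ω | t < Y ω} \ {ω | s < Y ω} := by
        ext ω
        simp only [mem_setOf_eq, mem_diff, not_lt]
        constructor
        · rintro ⟨hle, hty⟩
          refine ⟨hty, ?_⟩
          rw [hPIT t ht ω hty] at hle
          have hlog : Real.log (1-u) ≤ t - Y ω := by
            rw [← Real.log_exp (t - Y ω)]
            exact Real.log_le_log h1u (by linarith)
          rw [hs]; linarith
        · rintro ⟨hty, hys⟩
          refine ⟨?_, hty⟩
          rw [hPIT t ht ω hty]
          have : 1 - u ≤ Real.exp (t - Y ω) := by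
            calc 1 - u = Real.exp (Real.log (1-u)) := (Real.exp_log h1u).symm
            _ ≤ Real.exp (t - Y ω) := Real.exp_le_exp.2 (by rw [hs] at hys; linarith)
          linarith
      rw [hset]
      have hdiff : μ ({ω | t < Y ω} \ {ω | s < Y ω}) = μ {ω | t < Y ω} - μ {ω | s < Y ω} :=
        measure_diff (fun ω h => lt_of_le_of_lt hts h)
          ((hmeasIoi s).nullMeasurableSet) (measure_ne_top μ _)
      rw [hdiff, hYexp t htpos.le, hYexp s (by linarith)]
      have hes : Real.exp (-s) = (1-u) * Real.exp (-t) := by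
        rw [hs, show -(t - Real.log (1-u)) = Real.log (1-u) + -t by ring,
          Real.exp_add, Real.exp_log h1u]
      rw [← ENNReal.ofReal_sub _ (Real.exp_pos _).le]
      have het := Real.exp_pos (-t)
      rw [ENNReal.toReal_ofReal (by nlinarith [hes] : 0 ≤ Real.exp (-t) - Real.exp (-s))]
      rw [hes]
      field_simp
      ring
  -- endpoint
  have hEnd : upperEndpoint μ Y = ⊤ := by
    unfold upperEndpoint
    rw [sSup_eq_top]
    intro b hb
    obtain ⟨x, hx0, hbx⟩ : ∃ x:ℝ, 0 ≤ x ∧ b < (x:EReal) := by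
      induction b with
      | bot => exact ⟨0, le_refl _, bot_lt_iff_ne_bot.2 (by simp)⟩
      | coe r => exact ⟨max 0 (r+1), le_max_left _ _,
          by exact_mod_cast lt_of_lt_of_le (by linarith) (le_max_right 0 (r+1))⟩
      | top => exact absurd hb (lt_irrefl _)
    refine ⟨(x:EReal), ⟨x, ?_, rfl⟩, hbx⟩
    show μ {ω | Y ω ≤ x} < 1
    have hsx : {ω | Y ω ≤ x} = {ω | x < Y ω}ᶜ := by ext ω; simp [not_lt]
    rw [hsx, measure_compl (hmeasIoi x) (measure_ne_top μ _), measure_univ,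
      hYexp x hx0]
    exact ENNReal.sub_lt_self ENNReal.one_ne_top one_ne_zero
      (ENNReal.ofReal_pos.2 (Real.exp_pos _)).ne'
  have hToEnd : toEndpoint (upperEndpoint μ Y) = atTop := by
    rw [hEnd]
    unfold toEndpoint
    have h : Iio (⊤:EReal) = {(⊤:EReal)}ᶜ := by ext x; simp [lt_top_iff_ne_top]
    rw [show (𝓝[<] (⊤:EReal)) = 𝓝[≠] (⊤:EReal) by rw [h], EReal.nhdsWithin_top,
      Filter.comap_map (fun a b => by simp)]
  -- Part 3
  have hsub : MeasurableSpace.comap τ inferInstance ≤ m0 := hτ.comap_le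
  have hsubY : MeasurableSpace.comap Y inferInstance ≤ m0 := hY.comap_le
  haveI : SigmaFinite (μ.trim hsub) := by
    haveI := isFiniteMeasure_trim hsub (μ := μ)
    infer_instance
  have part3 : ∀ t : ℝ, Real.log (3 / 2) ≤ t →
      ∀ᵐ ω ∂μ,
        condProb μ (MeasurableSpace.comap τ inferInstance) {ω' | t < Y ω'} ω /
          (1 - F ω t) = 2 / (2 + τ ω) := by
    intro t ht
    have hsm : StronglyMeasurable[MeasurableSpace.comap Y inferInstance]
        ({ω' | t < Y ω'}.indicator (fun _ => (1:ℝ))) := by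
      exact stronglyMeasurable_const.indicator ⟨Set.Ioi t, measurableSet_Ioi, rfl⟩
    have hcond := condExp_indep_eq hsubY hsub hsm hindep
    have hint : μ[({ω' | t < Y ω'}.indicator (fun _ => (1:ℝ)))] = Real.exp (-t) := by
      rw [integral_indicator_const (1:ℝ) (hmeasIoi t), measureReal_def,
        hYexp t (hexp32.trans_le ht).le, ENNReal.toReal_ofReal (Real.exp_pos _).le,
        smul_eq_mul, mul_one]
    unfold condProb
    filter_upwards [hcond] with ω hω
    rw [hω, hint, hF1 ω ht]
    have h0 := Real.exp_ne_zero (-t)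
    rcases hτval ω with h|h <;> rw [h] <;> field_simp <;> ring
  refine ⟨part1, ⟨fun t _ => hIntpos t, ?_⟩, part3, ?_⟩
  · -- ProbTailCalibrated second part
    intro u hu
    rw [hToEnd]
    refine Tendsto.congr' ?_ tendsto_const_nhds
    filter_upwards [eventually_ge_atTop (Real.log (3/2))] with t htt
    exact (part1 t htt u hu).symm
  · -- not tail auto-calibrated
    intro hcontra
    have hseq : ∀ n : ℕ, ∀ᵐ ω ∂μ,
        condProb μ (MeasurableSpace.comap τ inferInstance) {ω' | (Real.log (3/2) + n) < Y ω'} ω /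
          (1 - F ω (Real.log (3/2) + n)) = 2 / (2 + τ ω) :=
      fun n => part3 _ (le_add_of_nonneg_right n.cast_nonneg)
    have hall := (ae_all_iff.2 hseq).and hcontra
    obtain ⟨ω, hω1, hω2⟩ := hall.exists
    have htendn : Tendsto (fun n:ℕ => Real.log (3/2) + (n:ℝ)) atTop atTop :=
      tendsto_atTop_add_const_left _ _ tendsto_natCast_atTop_atTop
    have htend : Tendsto (fun _:ℕ => (2:ℝ)/(2+τ ω)) atTop (𝓝 1) := by
      have hcomp := hω2.comp htendn
      refine hcomp.congr fun n => ?_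
      exact hω1 n
    have heq : (2:ℝ)/(2+τ ω) = 1 := tendsto_nhds_unique tendsto_const_nhds htend
    rcases hτval ω with h|h <;> rw [h] at heq <;> norm_num at heq
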